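/- arXiv:2301.09176 — 2 statements merged into one kernel-verified Lean document; each statement's English description precedes it below -/
import Mathlib

section
/- For every odd natural number k, the set S = {(α, y, z) ∈ ℤ_[2]³ : y is a unit, and there exists a unit u ∈ ℤ_[2] with α² + 4yz = 2^k·u} satisfies: μ³(S) = 2^{-(k+1)} if k ≥ 3, and μ³(S) = 0 if k = 1. (Equivalently, conditioned on y being a unit, the probability that v₂(α²+4yz) = k — i.e. that sqf(α²+4yz) ≡ 2 (mod 4) with v₂(α²+4yz) = k — is 2^{-k} for odd k ≥ 3 and 0 for k = 1; this is Theorem 6.2, part (3).) -/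
open MeasureTheory
open scoped ENNReal

noncomputable instance : MeasurableSpace ℤ_[2] := borel ℤ_[2]
instance : BorelSpace ℤ_[2] := ⟨rfl⟩

open scoped Classical

theorem dvd_iff_norm (x : ℤ_[2]) (n : ℕ) : (2:ℤ_[2])^n ∣ x ↔ ‖x‖ ≤ ((2:ℝ)^n)⁻¹ := by
  have := PadicInt.norm_le_pow_iff_mem_span_pow x n (p := 2)
  rw [Ideal.mem_span_singleton] at this
  simp only [Nat.cast_ofNat] at this
  rw [← this, zpow_neg, zpow_natCast]

theorem meas_dvd (n : ℕ) : MeasurableSet {x : ℤ_[2] | (2:ℤ_[2])^n ∣ x} := by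
  have : {x : ℤ_[2] | (2:ℤ_[2])^n ∣ x} = {x : ℤ_[2] | ‖x‖ ≤ ((2:ℝ)^n)⁻¹} := by
    ext x; exact dvd_iff_norm x n
  rw [this]
  exact measurableSet_le (continuous_norm.measurable) measurable_const

theorem two_prime : Prime (2:ℤ_[2]) := by
  have := PadicInt.prime_p (p := 2)
  simpa using this

theorem two_dvd_or (w : ℤ_[2]) : (2:ℤ_[2]) ∣ w ∨ (2:ℤ_[2]) ∣ (w - 1) := by
  have hdvd : ∀ v : ℤ_[2], (2:ℤ_[2]) ∣ v ↔ PadicInt.toZMod v = 0 := by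
    intro v
    rw [show ((2:ℤ_[2])) = ((2:ℕ):ℤ_[2]) by norm_num, ← Ideal.mem_span_singleton,
      ← PadicInt.maximalIdeal_eq_span_p, ← PadicInt.ker_toZMod, RingHom.mem_ker]
  have h01 : ∀ a : ZMod 2, a = 0 ∨ a = 1 := by decide
  rcases h01 (PadicInt.toZMod w) with h | h
  · exact Or.inl ((hdvd w).2 h)
  · refine Or.inr ((hdvd _).2 ?_)
    rw [map_sub, h, map_one, sub_self]

theorem unit_iff_not_dvd (w : ℤ_[2]) : IsUnit w ↔ ¬ (2:ℤ_[2]) ∣ w := by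
  have hlt : ‖w‖ < 1 ↔ (2:ℤ_[2]) ∣ w := by
    rw [PadicInt.norm_lt_one_iff_dvd]; norm_num
  rw [PadicInt.isUnit_iff]
  constructor
  · intro h hd
    rw [← hlt] at hd; linarith
  · intro h
    rw [← hlt] at h
    have := PadicInt.norm_le_one w
    rcases lt_or_eq_of_le this with h' | h'
    · exact absurd h' h
    · exact h'

theorem two_pow_ne_zero (n : ℕ) : (2:ℤ_[2])^n ≠ 0 := pow_ne_zero _ two_prime.ne_zero

theorem meas_A (μ : Measure ℤ_[2]) [μ.IsAddHaarMeasure] [IsProbabilityMeasure μ] (n : ℕ) :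
    μ {x : ℤ_[2] | (2:ℤ_[2])^n ∣ x} = ((2:ℝ≥0∞)^n)⁻¹ := by
  induction n with
  | zero =>
    simp only [pow_zero, one_dvd, Set.setOf_true, inv_one]
    exact measure_univ
  | succ n ih =>
    set B : Set ℤ_[2] := {x | (2:ℤ_[2])^(n+1) ∣ x} with hB
    have hBm : MeasurableSet B := meas_dvd (n+1)
    have hCB : {x : ℤ_[2] | (2:ℤ_[2])^(n+1) ∣ x - 2^n} = ((-(2:ℤ_[2])^n) + ·) ⁻¹' B := by
      ext x; simp only [Set.mem_setOf_eq, Set.mem_preimage, hB]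
      rw [sub_eq_neg_add]
    have hunion : {x : ℤ_[2] | (2:ℤ_[2])^n ∣ x}
        = B ∪ {x : ℤ_[2] | (2:ℤ_[2])^(n+1) ∣ x - 2^n} := by
      ext x
      simp only [Set.mem_setOf_eq, Set.mem_union, hB]
      constructor
      · rintro ⟨w, rfl⟩
        rcases two_dvd_or w with ⟨t, rfl⟩ | ⟨t, ht⟩
        · left; exact ⟨t, by ring⟩
        · right; refine ⟨t, ?_⟩
          have : w = 1 + 2*t := by linear_combination ht
          rw [this]; ring
      · rintro (⟨t, rfl⟩ | ⟨t, ht⟩)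
        · exact ⟨2*t, by ring⟩
        · exact ⟨1 + 2*t, by linear_combination ht⟩
    have hdisj : Disjoint B {x : ℤ_[2] | (2:ℤ_[2])^(n+1) ∣ x - 2^n} := by
      rw [Set.disjoint_left]
      rintro x hx hx2
      have hd : (2:ℤ_[2])^(n+1) ∣ (2:ℤ_[2])^n := by
        have := dvd_sub hx hx2
        simpa using this
      rw [dvd_iff_norm] at hd
      have hnp : ‖(2:ℤ_[2])^n‖ = ((2:ℝ)^n)⁻¹ := by
        rw [show ((2:ℤ_[2])^n) = ((2:ℕ):ℤ_[2])^n by norm_num, PadicInt.norm_p_pow,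
          zpow_neg, zpow_natCast]; norm_num
      rw [hnp, inv_le_inv₀ (by positivity) (by positivity), pow_succ] at hd
      nlinarith [pow_pos (show (0:ℝ) < 2 by norm_num) n]
    have hstep : μ {x : ℤ_[2] | (2:ℤ_[2])^n ∣ x} = μ B + μ B := by
      rw [hunion, measure_union hdisj (by rw [hCB]; exact (measurable_const_add _) hBm)]
      congr 1
      rw [hCB, measure_preimage_add]
    rw [ih] at hstep
    have h2 : (2:ℝ≥0∞) ≠ 0 := by norm_num
    have h2' : (2:ℝ≥0∞) ≠ ⊤ := by norm_num
    have : μ B = ((2:ℝ≥0∞)^(n+1))⁻¹ := by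
      have hfin : μ B ≠ ⊤ := measure_ne_top μ B
      have h2m : (2:ℝ≥0∞) * μ B = ((2:ℝ≥0∞)^n)⁻¹ := by rw [two_mul]; exact hstep.symm
      have : μ B = ((2:ℝ≥0∞)^n)⁻¹ / 2 := by
        rw [ENNReal.eq_div_iff h2 h2', h2m]
      rw [this, pow_succ, ENNReal.mul_inv (Or.inl (pow_ne_zero n (by norm_num))) (Or.inl (by simp)), div_eq_mul_inv]
    exact this

theorem meas_units_set : MeasurableSet {y : ℤ_[2] | IsUnit y} := by
  have : {y : ℤ_[2] | IsUnit y} = {y : ℤ_[2] | (2:ℤ_[2])^1 ∣ y}ᶜ := by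
    ext y; simp [unit_iff_not_dvd]
  rw [this]; exact (meas_dvd 1).compl

theorem meas_units (μ : Measure ℤ_[2]) [μ.IsAddHaarMeasure] [IsProbabilityMeasure μ] :
    μ {y : ℤ_[2] | IsUnit y} = 2⁻¹ := by
  have h1 : {y : ℤ_[2] | IsUnit y} = {y : ℤ_[2] | (2:ℤ_[2])^1 ∣ y}ᶜ := by
    ext y; simp [unit_iff_not_dvd]
  rw [h1, measure_compl (meas_dvd 1) (measure_ne_top μ _), meas_A μ 1, measure_univ, pow_one,
    ENNReal.one_sub_inv_two]

-- translate set: {z | 2^m ∣ c + y*z} for unit y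
theorem translate_set (y c : ℤ_[2]) (hy : IsUnit y) (m : ℕ) :
    ∃ a : ℤ_[2], {z : ℤ_[2] | (2:ℤ_[2])^m ∣ c + y*z} = (a + ·) ⁻¹' {x : ℤ_[2] | (2:ℤ_[2])^m ∣ x} := by
  obtain ⟨u, rfl⟩ := hy
  refine ⟨(u⁻¹ : ℤ_[2]ˣ) * c, ?_⟩
  ext z
  simp only [Set.mem_setOf_eq, Set.mem_preimage]
  constructor
  · rintro ⟨t, ht⟩
    refine ⟨(u⁻¹ : ℤ_[2]ˣ) * t, ?_⟩
    have := congrArg (fun x => ((u⁻¹ : ℤ_[2]ˣ) : ℤ_[2]) * x) ht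
    calc ((u⁻¹ : ℤ_[2]ˣ) : ℤ_[2]) * c + z
        = ((u⁻¹ : ℤ_[2]ˣ) : ℤ_[2]) * (c + u*z) + (1 - (u⁻¹ : ℤ_[2]ˣ) * u) * z := by ring
      _ = 2^m * ((u⁻¹ : ℤ_[2]ˣ) * t) := by
          rw [ht]; simp [Units.inv_mul]; ring
  · rintro ⟨t, ht⟩
    refine ⟨u * t, ?_⟩
    calc c + (u:ℤ_[2]) * z = (u:ℤ_[2]) * (((u⁻¹ : ℤ_[2]ˣ) : ℤ_[2]) * c + z)
          + (1 - (u:ℤ_[2]) * (u⁻¹ : ℤ_[2]ˣ)) * c := by ring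
      _ = 2^m * ((u:ℤ_[2]) * t) := by rw [ht]; simp [Units.mul_inv]; ring

theorem translate_meas (y c : ℤ_[2]) (hy : IsUnit y) (m : ℕ) :
    MeasurableSet {z : ℤ_[2] | (2:ℤ_[2])^m ∣ c + y*z} := by
  obtain ⟨a, ha⟩ := translate_set y c hy m
  rw [ha]; exact (measurable_const_add a) (meas_dvd m)

theorem translate_measure (μ : Measure ℤ_[2]) [μ.IsAddHaarMeasure] [IsProbabilityMeasure μ]
    (y c : ℤ_[2]) (hy : IsUnit y) (m : ℕ) :
    μ {z : ℤ_[2] | (2:ℤ_[2])^m ∣ c + y*z} = ((2:ℝ≥0∞)^m)⁻¹ := by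
  obtain ⟨a, ha⟩ := translate_set y c hy m
  rw [ha, measure_preimage_add, meas_A]

theorem exu (x : ℤ_[2]) (k : ℕ) :
    (∃ u : ℤ_[2], IsUnit u ∧ x = 2^k * u) ↔ ((2:ℤ_[2])^k ∣ x ∧ ¬(2:ℤ_[2])^(k+1) ∣ x) := by
  constructor
  · rintro ⟨u, hu, rfl⟩
    refine ⟨⟨u, rfl⟩, ?_⟩
    rintro ⟨t, ht⟩
    have : u = 2 * t := by
      apply mul_left_cancel₀ (two_pow_ne_zero k)
      rw [ht]; ring
    have h2u : (2:ℤ_[2]) ∣ u := ⟨t, this⟩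
    exact (unit_iff_not_dvd u).1 hu h2u
  · rintro ⟨⟨w, rfl⟩, hnd⟩
    refine ⟨w, ?_, rfl⟩
    rw [unit_iff_not_dvd]
    rintro ⟨t, rfl⟩
    exact hnd ⟨t, by ring⟩

theorem slice_meas (μ : Measure ℤ_[2]) [μ.IsAddHaarMeasure] [IsProbabilityMeasure μ]
    (k : ℕ) (hk : Odd k) (α y : ℤ_[2]) :
    μ {z : ℤ_[2] | IsUnit y ∧ ((2:ℤ_[2])^k ∣ α^2+4*y*z ∧ ¬(2:ℤ_[2])^(k+1) ∣ α^2+4*y*z)}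
      = if IsUnit y ∧ (2:ℤ_[2]) ∣ α ∧ 3 ≤ k then ((2:ℝ≥0∞)^(k-1))⁻¹ else 0 := by
  have hk1 : 1 ≤ k := hk.pos
  by_cases hy : IsUnit y
  · by_cases hα : (2:ℤ_[2]) ∣ α
    · obtain ⟨β, rfl⟩ := hα
      have hfac : ∀ z : ℤ_[2], (2*β)^2 + 4*y*z = 2^2 * (β^2 + y*z) := by intro z; ring
      by_cases h3 : 3 ≤ k
      · obtain ⟨m, rfl⟩ : ∃ m, k = m + 3 := ⟨k - 3, by omega⟩
        have hseteq : {z : ℤ_[2] | IsUnit y ∧ ((2:ℤ_[2])^(m+3) ∣ (2*β)^2+4*y*z ∧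
              ¬(2:ℤ_[2])^(m+3+1) ∣ (2*β)^2+4*y*z)}
            = {z : ℤ_[2] | (2:ℤ_[2])^(m+1) ∣ β^2 + y*z} \ {z : ℤ_[2] | (2:ℤ_[2])^(m+2) ∣ β^2 + y*z} := by
          ext z
          have e1 : ((2:ℤ_[2])^(m+3) ∣ (2*β)^2+4*y*z) ↔ ((2:ℤ_[2])^(m+1) ∣ β^2 + y*z) := by
            rw [hfac z, show ((2:ℤ_[2])^(m+3)) = 2^2 * 2^(m+1) by ring]
            exact mul_dvd_mul_iff_left (two_pow_ne_zero 2)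
          have e2 : ((2:ℤ_[2])^(m+3+1) ∣ (2*β)^2+4*y*z) ↔ ((2:ℤ_[2])^(m+2) ∣ β^2 + y*z) := by
            rw [hfac z, show ((2:ℤ_[2])^(m+3+1)) = 2^2 * 2^(m+2) by ring]
            exact mul_dvd_mul_iff_left (two_pow_ne_zero 2)
          simp only [Set.mem_setOf_eq, Set.mem_diff, e1, e2, hy, true_and]
        rw [hseteq, measure_diff
            (fun z hz => by
              simp only [Set.mem_setOf_eq] at hz ⊢
              exact dvd_trans (pow_dvd_pow 2 (by omega)) hz)
            (translate_meas y (β^2) hy (m+2)).nullMeasurableSet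
            (measure_ne_top μ _),
          translate_measure μ y (β^2) hy (m+1), translate_measure μ y (β^2) hy (m+2)]
        have hif : (IsUnit y ∧ (2:ℤ_[2]) ∣ 2*β ∧ 3 ≤ m+3) := ⟨hy, ⟨β, rfl⟩, by omega⟩
        rw [if_pos hif]
        have key : ((2:ℝ≥0∞)^(m+2))⁻¹ = (2^(m+1))⁻¹ * 2⁻¹ := by
          rw [pow_succ, ENNReal.mul_inv (Or.inl (pow_ne_zero _ (by norm_num))) (Or.inl (by simp))]
        have hsum : ((2:ℝ≥0∞)^(m+1))⁻¹ = (2^(m+2))⁻¹ + (2^(m+2))⁻¹ := by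
          rw [key, ← mul_add, ENNReal.inv_two_add_inv_two, mul_one]
        rw [ENNReal.sub_eq_of_eq_add (by simp) hsum]
        rw [show m+3-1 = m+2 by omega, key]
      · obtain ⟨j, rfl⟩ := hk
        have hj : j = 0 := by omega
        subst hj
        have : {z : ℤ_[2] | IsUnit y ∧ ((2:ℤ_[2])^(2*0+1) ∣ (2*β)^2+4*y*z ∧
            ¬(2:ℤ_[2])^(2*0+1+1) ∣ (2*β)^2+4*y*z)} = ∅ := by
          ext z
          simp only [Set.mem_setOf_eq, Set.mem_empty_iff_false, iff_false]
          rintro ⟨-, -, hnd⟩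
          exact hnd ⟨β^2 + y*z, by ring⟩
        have h0 := congrArg μ this
        rw [measure_empty] at h0
        rw [if_neg (by tauto)]
        exact h0
    · have : {z : ℤ_[2] | IsUnit y ∧ ((2:ℤ_[2])^k ∣ α^2+4*y*z ∧
          ¬(2:ℤ_[2])^(k+1) ∣ α^2+4*y*z)} = ∅ := by
        ext z
        simp only [Set.mem_setOf_eq, Set.mem_empty_iff_false, iff_false]
        rintro ⟨-, hd, -⟩
        have h2 : (2:ℤ_[2]) ∣ α^2+4*y*z := dvd_trans (dvd_pow_self 2 (n := k) (by omega)) hd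
        have h2' : (2:ℤ_[2]) ∣ α^2 := by
          have h4 : (2:ℤ_[2]) ∣ 4*y*z := ⟨2*y*z, by ring⟩
          have := dvd_sub h2 h4
          simpa using this
        have : (2:ℤ_[2]) ∣ α := by
          rcases two_prime.dvd_mul.mp (by rwa [sq] at h2') with h | h <;> exact h
        exact hα this
      rw [this, measure_empty, if_neg (by tauto)]
  · have : {z : ℤ_[2] | IsUnit y ∧ ((2:ℤ_[2])^k ∣ α^2+4*y*z ∧
        ¬(2:ℤ_[2])^(k+1) ∣ α^2+4*y*z)} = ∅ := by
      ext z; simp [hy]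
    rw [this, measure_empty, if_neg (by tauto)]

/-- Theorem 6.2, part (3): for the Haar probability measure `μ` on `ℤ_[2]` and odd `k`, the
set of triples `(α, y, z)` with `y` a unit and `v₂(α² + 4yz) = k` (equivalently, the squarefree
part of `α² + 4yz` is `≡ 2 (mod 4)` and the valuation is `k`) has `μ³`-measure `2^{-(k+1)}`
when `k ≥ 3`, and `0` when `k = 1`. -/
theorem stmt2 (k : ℕ) (hk : Odd k)
    (μ : Measure ℤ_[2]) [μ.IsAddHaarMeasure] [IsProbabilityMeasure μ] :
    (μ.prod (μ.prod μ)) {p : ℤ_[2] × ℤ_[2] × ℤ_[2] |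
        IsUnit p.2.1 ∧ ∃ u : ℤ_[2], IsUnit u ∧
          p.1 ^ 2 + 4 * p.2.1 * p.2.2 = 2 ^ k * u}
      = if 3 ≤ k then ((2 : ℝ≥0∞) ^ (k + 1))⁻¹ else 0 := by
  classical
  set f : ℤ_[2] × ℤ_[2] × ℤ_[2] → ℤ_[2] := fun p => p.1^2 + 4*p.2.1*p.2.2 with hf
  have hfm : Measurable f := by
    apply Continuous.measurable
    fun_prop
  have hE : MeasurableSet ({x : ℤ_[2] | (2:ℤ_[2])^k ∣ x} \ {x : ℤ_[2] | (2:ℤ_[2])^(k+1) ∣ x}) :=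
    (meas_dvd k).diff (meas_dvd (k+1))
  have hS : {p : ℤ_[2] × ℤ_[2] × ℤ_[2] | IsUnit p.2.1 ∧ ∃ u : ℤ_[2], IsUnit u ∧
        p.1 ^ 2 + 4 * p.2.1 * p.2.2 = 2 ^ k * u}
      = ((fun p : ℤ_[2] × ℤ_[2] × ℤ_[2] => p.2.1) ⁻¹' {y | IsUnit y})
        ∩ (f ⁻¹' ({x : ℤ_[2] | (2:ℤ_[2])^k ∣ x} \ {x : ℤ_[2] | (2:ℤ_[2])^(k+1) ∣ x})) := by
    ext p
    simp only [Set.mem_setOf_eq, Set.mem_inter_iff, Set.mem_preimage, Set.mem_diff, hf]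
    rw [exu]
  have hSm : MeasurableSet (((fun p : ℤ_[2] × ℤ_[2] × ℤ_[2] => p.2.1) ⁻¹' {y | IsUnit y})
        ∩ (f ⁻¹' ({x : ℤ_[2] | (2:ℤ_[2])^k ∣ x} \ {x : ℤ_[2] | (2:ℤ_[2])^(k+1) ∣ x}))) :=
    ((measurable_fst.comp measurable_snd) meas_units_set).inter (hfm hE)
  rw [hS, Measure.prod_apply hSm]
  have hstep : ∀ α : ℤ_[2], (μ.prod μ) (Prod.mk α ⁻¹'
        (((fun p : ℤ_[2] × ℤ_[2] × ℤ_[2] => p.2.1) ⁻¹' {y | IsUnit y})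
        ∩ (f ⁻¹' ({x : ℤ_[2] | (2:ℤ_[2])^k ∣ x} \ {x : ℤ_[2] | (2:ℤ_[2])^(k+1) ∣ x}))))
      = if (2:ℤ_[2]) ∣ α ∧ 3 ≤ k then ((2:ℝ≥0∞)^(k-1))⁻¹ * 2⁻¹ else 0 := by
    intro α
    rw [Measure.prod_apply (measurable_prodMk_left hSm)]
    have hyz : ∀ y : ℤ_[2], μ (Prod.mk y ⁻¹' (Prod.mk α ⁻¹'
          (((fun p : ℤ_[2] × ℤ_[2] × ℤ_[2] => p.2.1) ⁻¹' {y | IsUnit y})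
          ∩ (f ⁻¹' ({x : ℤ_[2] | (2:ℤ_[2])^k ∣ x} \ {x : ℤ_[2] | (2:ℤ_[2])^(k+1) ∣ x})))))
        = if IsUnit y ∧ (2:ℤ_[2]) ∣ α ∧ 3 ≤ k then ((2:ℝ≥0∞)^(k-1))⁻¹ else 0 := by
      intro y
      rw [← slice_meas μ k hk α y]
      apply congr_arg μ
      ext z
      exact Iff.rfl
    rw [lintegral_congr hyz]
    by_cases hQ : (2:ℤ_[2]) ∣ α ∧ 3 ≤ k
    · rw [if_pos hQ]
      have hind : ∀ y : ℤ_[2], (if IsUnit y ∧ (2:ℤ_[2]) ∣ α ∧ 3 ≤ k then ((2:ℝ≥0∞)^(k-1))⁻¹ else 0)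
          = {y : ℤ_[2] | IsUnit y}.indicator (fun _ => ((2:ℝ≥0∞)^(k-1))⁻¹) y := by
        intro y; rw [Set.indicator_apply]
        by_cases hy : IsUnit y
        · simp [Set.mem_setOf_eq, hy, hQ]
        · simp [Set.mem_setOf_eq, hy]
      rw [lintegral_congr hind, lintegral_indicator meas_units_set, setLIntegral_const, meas_units]
    · rw [if_neg hQ]
      have hzero : ∀ y : ℤ_[2], (if IsUnit y ∧ (2:ℤ_[2]) ∣ α ∧ 3 ≤ k then ((2:ℝ≥0∞)^(k-1))⁻¹ else 0)
          = 0 := fun y => if_neg (by tauto)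
      rw [lintegral_congr hzero, lintegral_zero]
  rw [lintegral_congr hstep]
  by_cases h3 : 3 ≤ k
  · rw [if_pos h3]
    have hind : ∀ α : ℤ_[2], (if (2:ℤ_[2]) ∣ α ∧ 3 ≤ k then ((2:ℝ≥0∞)^(k-1))⁻¹ * 2⁻¹ else 0)
        = {α : ℤ_[2] | (2:ℤ_[2])^1 ∣ α}.indicator (fun _ => ((2:ℝ≥0∞)^(k-1))⁻¹ * 2⁻¹) α := by
      intro α; rw [Set.indicator_apply]
      by_cases hα : (2:ℤ_[2]) ∣ α
      · simp [Set.mem_setOf_eq, hα, h3]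
      · simp [Set.mem_setOf_eq, hα]
    rw [lintegral_congr hind, lintegral_indicator (meas_dvd 1), setLIntegral_const, meas_A μ 1,
      pow_one]
    obtain ⟨m, rfl⟩ : ∃ m, k = m+3 := ⟨k-3, by omega⟩
    rw [show m+3-1 = m+2 from rfl, show m+3+1 = m+2+1+1 from rfl, ENNReal.inv_pow,
      ENNReal.inv_pow]
    ring
  · rw [if_neg h3]
    have hzero : ∀ α : ℤ_[2], (if (2:ℤ_[2]) ∣ α ∧ 3 ≤ k then ((2:ℝ≥0∞)^(k-1))⁻¹ * 2⁻¹ else 0)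
        = 0 := fun α => if_neg (by tauto)
    rw [lintegral_congr hzero, lintegral_zero]
end

section
/- Let m ≥ 2 be an integer and A a 2×2 matrix over the 2-adic integers ℤ_[2] such that: (i) every entry of A − I is divisible by 2; (ii) for every vector v ∈ (ℤ/4ℤ)² of additive order 4, Ā·v ≠ v, where Ā is the entrywise reduction of A modulo 4; and (iii) every entry of A² − I is divisible by 2^{m+1}. Then every entry of A + I is divisible by 2^m, i.e. A = −I + 2^m·M for some 2×2 matrix M over ℤ_[2]. If, moreover, (iv) some entry of A² − I is not divisible by 2^{m+2}, then some entry of A + I is not divisible by 2^{m+1}, i.e. M ≢ 0 (mod 2). -/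
open Matrix

private lemma zmod2_singular (N : Matrix (Fin 2) (Fin 2) (ZMod 2)) (h : N.det = 0) :
    ∃ w : Fin 2 → ZMod 2, w ≠ 0 ∧ N.mulVec w = 0 := by
  revert h
  revert N
  decide

/-- The matrix computation underlying Proposition 5.5: let `m ≥ 2` and let `A` be a `2×2`
matrix over `ℤ_[2]` such that (i) `A ≡ I (mod 2)` entrywise, (ii) the reduction of `A`
modulo `4` fixes no vector of additive order `4` in `(ℤ/4ℤ)²`, and (iii) `A² ≡ I (mod 2^{m+1})`
entrywise.  Then `A ≡ −I (mod 2^m)` entrywise, and if moreover (iv) `A² ≢ I (mod 2^{m+2})`,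
then `A ≢ −I (mod 2^{m+1})`, i.e. `A = −I + 2^m·M` with `M ≢ 0 (mod 2)`. -/
theorem stmt8 (m : ℕ) (hm : 2 ≤ m) (A : Matrix (Fin 2) (Fin 2) ℤ_[2])
    (h1 : ∀ i j, (2 : ℤ_[2]) ∣ (A - 1) i j)
    (h2 : ∀ v : Fin 2 → ZMod 4, addOrderOf v = 4 →
      (A.map (PadicInt.toZModPow 2)).mulVec v ≠ v)
    (h3 : ∀ i j, (2 : ℤ_[2]) ^ (m + 1) ∣ ((A ^ 2 - 1 : Matrix (Fin 2) (Fin 2) ℤ_[2]) i j)) :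
    (∀ i j, (2 : ℤ_[2]) ^ m ∣ (A + 1) i j) ∧
    ((∃ i j, ¬ (2 : ℤ_[2]) ^ (m + 2) ∣ ((A ^ 2 - 1 : Matrix (Fin 2) (Fin 2) ℤ_[2]) i j)) →
      ∃ i j, ¬ (2 : ℤ_[2]) ^ (m + 1) ∣ (A + 1) i j) := by
  choose B0 hB0 using h1
  set B : Matrix (Fin 2) (Fin 2) ℤ_[2] := Matrix.of B0 with hBdef
  have hB : ∀ i j, (A - 1) i j = 2 * B i j := fun i j => hB0 i j
  have hAB : A - 1 = (2 : ℤ_[2]) • B := by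
    ext i j
    simpa using hB i j
  -- the mod 2 reduction of B is invertible
  set ψ1 : ℤ_[2] →+* ZMod 2 := PadicInt.toZModPow 1 with hψ1
  have hdet : IsUnit B.det := by
    by_contra hu
    have h2d : (2 : ℤ_[2]) ∣ B.det := by
      have := (PadicInt.norm_lt_one_iff_dvd B.det).mp (PadicInt.not_isUnit_iff.mp hu)
      simpa using this
    have hdet0 : (B.map ψ1).det = 0 := by
      rw [show B.map ⇑ψ1 = ψ1.mapMatrix B from rfl, ← RingHom.map_det]
      obtain ⟨c, hc⟩ := h2d
      rw [hc, _root_.map_mul]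
      have : ψ1 (2 : ℤ_[2]) = 0 := by
        have h22 : (2 : ℤ_[2]) = ((2 : ℕ) : ℤ_[2]) := by norm_cast
        rw [h22, map_natCast]
        decide
      rw [this, zero_mul]
    obtain ⟨w, hw0, hww⟩ := zmod2_singular (B.map ψ1) hdet0
    set v : Fin 2 → ZMod 4 := fun i => ((w i).val : ZMod 4) with hv
    have hv4 : addOrderOf v = 4 := by
      have : addOrderOf v = 2 ^ (1 + 1) := by
        apply addOrderOf_eq_prime_pow (p := 2) (n := 1)
        · intro hcon
          obtain ⟨i, hi⟩ : ∃ i, w i ≠ 0 := by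
            by_contra hall
            push_neg at hall
            exact hw0 (funext hall)
          have hcon' := congrFun hcon i
          have : (2 : ℕ) ^ 1 • v i = 0 := hcon'
          revert this
          have hwi : w i = 1 := (by decide : ∀ a : ZMod 2, a ≠ 0 → a = 1) _ hi
          simp only [hv, hwi]
          decide
        · funext i
          exact (by decide : ∀ x : ZMod 4, (2 : ℕ) ^ (1 + 1) • x = 0) (v i)
      simpa using this
    apply h2 v hv4
    -- show the reduction of A mod 4 fixes v
    set φ : ℤ_[2] →+* ZMod (2 ^ 2) := PadicInt.toZModPow 2 with hφ
    have hψφ : ∀ x : ℤ_[2],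
        (ZMod.castHom (pow_dvd_pow 2 (by norm_num : 1 ≤ 2)) (ZMod (2 ^ 1))) (φ x) = ψ1 x := by
      intro x
      have := PadicInt.zmod_cast_comp_toZModPow (p := 2) 1 2 (by norm_num)
      calc (ZMod.castHom (pow_dvd_pow 2 (by norm_num : 1 ≤ 2)) (ZMod (2 ^ 1))) (φ x)
          = ((ZMod.castHom (pow_dvd_pow 2 (by norm_num : 1 ≤ 2)) (ZMod (2 ^ 1))).comp
            (PadicInt.toZModPow 2)) x := rfl
        _ = ψ1 x := by rw [this, hψ1]
    have hA4 : A.map φ = 1 + (2 : ZMod (2^2)) • (B.map φ) := by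
      ext i j
      have hAij : A i j = (1 : Matrix (Fin 2) (Fin 2) ℤ_[2]) i j + 2 * B i j := by
        have := hB i j
        rw [Matrix.sub_apply] at this
        linear_combination this
      simp only [Matrix.map_apply, Matrix.add_apply, Matrix.smul_apply, hAij, map_add,
        _root_.map_mul, map_ofNat, smul_eq_mul]
      congr 1
      by_cases h : i = j <;> simp [Matrix.one_apply, h]
    rw [hA4, Matrix.add_mulVec, Matrix.one_mulVec, Matrix.smul_mulVec]
    suffices h0 : (2 : ZMod (2^2)) • ((B.map φ).mulVec v) = 0 by
      rw [h0, add_zero]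
    funext i
    have hcast : (ZMod.castHom (pow_dvd_pow 2 (by norm_num : 1 ≤ 2)) (ZMod (2 ^ 1)))
        (((B.map φ).mulVec v) i) = 0 := by
      have hw' := congrFun hww i
      simp only [Matrix.mulVec, dotProduct, Fin.sum_univ_two, Matrix.map_apply,
        Pi.zero_apply] at hw' ⊢
      rw [map_add, _root_.map_mul, _root_.map_mul, hψφ, hψφ]
      have hvw : ∀ j, (ZMod.castHom (pow_dvd_pow 2 (by norm_num : 1 ≤ 2)) (ZMod (2 ^ 1)))
          (v j) = w j := by
        intro j
        exact (by decide : ∀ a : ZMod 2, (ZMod.castHom (pow_dvd_pow 2 (by norm_num : 1 ≤ 2))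
          (ZMod (2 ^ 1))) ((a.val : ZMod 4)) = a) (w j)
      rw [hvw, hvw]
      exact hw'
    have : (2 : ZMod (2^2)) • ((B.map φ).mulVec v) i = 0 := by
      revert hcast
      exact (by decide : ∀ x : ZMod (2^2),
        (ZMod.castHom (pow_dvd_pow 2 (by norm_num : 1 ≤ 2)) (ZMod (2 ^ 1))) x = 0 →
          (2 : ZMod (2^2)) • x = 0) _
    simpa using this
  -- now the divisibility computations
  choose D0 hD0 using h3
  set D : Matrix (Fin 2) (Fin 2) ℤ_[2] := Matrix.of D0 with hDdef
  have hD : ∀ i j, (A ^ 2 - 1 : Matrix (Fin 2) (Fin 2) ℤ_[2]) i j = 2 ^ (m + 1) * D i j := fun i j => hD0 i j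
  have hDm : A ^ 2 - 1 = ((2 : ℤ_[2]) ^ (m + 1)) • D := by
    ext i j
    simpa using hD i j
  have hfact : A ^ 2 - 1 = (A - 1) * (A + 1) := by noncomm_ring
  have hBkey : B * (A + 1) = ((2 : ℤ_[2]) ^ m) • D := by
    ext i j
    have h1' : ((2 : ℤ_[2]) • (B * (A + 1))) i j = (((2 : ℤ_[2]) ^ (m + 1)) • D) i j := by
      rw [← Matrix.smul_mul, ← hAB, ← hfact, hDm]
    simp only [Matrix.smul_apply, smul_eq_mul] at h1' ⊢
    have h2ne : (2 : ℤ_[2]) ≠ 0 := two_ne_zero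
    apply mul_left_cancel₀ h2ne
    rw [h1']
    simp only [Matrix.smul_apply, smul_eq_mul, pow_succ]
    ring
  have hApl : A + 1 = ((2 : ℤ_[2]) ^ m) • (B⁻¹ * D) := by
    calc A + 1 = (B⁻¹ * B) * (A + 1) := by rw [Matrix.nonsing_inv_mul B hdet, one_mul]
      _ = B⁻¹ * (B * (A + 1)) := by rw [Matrix.mul_assoc]
      _ = B⁻¹ * (((2 : ℤ_[2]) ^ m) • D) := by rw [hBkey]
      _ = ((2 : ℤ_[2]) ^ m) • (B⁻¹ * D) := by rw [Matrix.mul_smul]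
  constructor
  · intro i j
    refine ⟨(B⁻¹ * D) i j, ?_⟩
    rw [hApl]
    simp
  · rintro ⟨i, j, hij⟩
    by_contra hc
    push_neg at hc
    choose E0 hE0 using hc
    set E : Matrix (Fin 2) (Fin 2) ℤ_[2] := Matrix.of E0 with hEdef
    have hE : ∀ i' j', (A + 1) i' j' = 2 ^ (m + 1) * E i' j' := fun i' j' => hE0 i' j'
    have hE' : A + 1 = ((2 : ℤ_[2]) ^ (m + 1)) • E := by
      ext i' j'
      simpa using hE i' j'
    apply hij
    refine ⟨(B * E) i j, ?_⟩
    have : A ^ 2 - 1 = ((2 : ℤ_[2]) ^ (m + 2)) • (B * E) := by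
      rw [hfact, hAB, hE', Matrix.smul_mul, Matrix.mul_smul, smul_smul]
      congr 1
      ring
    rw [this]
    simp
end
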